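/- In the IPC representation with pseudo marginals Q_v, pseudo classifiers β^(i)_v, pseudo weights φ^(i)_v = E_Q[β^(i)_v] > 0, and w̃_i = (∏_v φ^(i)_v)^{1/V}, the marginal of the v-th variate of the distribution P(X) = (∑_i w̃_i)^{-1} ∑_i w̃_i^{1−V} ∏_u Q_u(x_u) β^(i)_u(x_u) equals P_v(x_v) = Q_v(x_v) (∑_i w̃_i)^{-1} ∑_i β^(i)_v(x_v) w̃_i / φ^(i)_v. -/

import Mathlib

open MeasureTheory BigOperators

/-- Insert the value `x` at coordinate `v` into a point `y` of the remaining
coordinates, producing a full point of the product space. -/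
def insertAt {V : ℕ} {X : Fin V → Type*} (v : Fin V) (x : X v)
    (y : ∀ u : {u : Fin V // u ≠ v}, X u.1) (u : Fin V) : X u :=
  if h : u = v then (congrArg X h).mpr x else y ⟨u, h⟩

/-- In the IPC representation, the marginal of the v-th variate of
P(X) = (∑ᵢ w̃ᵢ)⁻¹ ∑ᵢ w̃ᵢ^{1−V} ∏ᵤ Qᵤ β⁽ⁱ⁾ᵤ equals
Q_v(x_v) (∑ᵢ w̃ᵢ)⁻¹ ∑ᵢ β⁽ⁱ⁾_v(x_v) w̃ᵢ / φ⁽ⁱ⁾_v. -/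
theorem statement_4 {V C : ℕ} (hV : 0 < V) {X : Fin V → Type*}
    [∀ v, MeasurableSpace (X v)]
    (μ : ∀ v, Measure (X v)) [∀ v, SigmaFinite (μ v)]
    (Q : ∀ v, X v → ℝ) (β : Fin C → ∀ v, X v → ℝ)
    (hQ_nonneg : ∀ v x, 0 ≤ Q v x)
    (hQ_one : ∀ v, ∫ x, Q v x ∂(μ v) = 1)
    (hβ_nonneg : ∀ i v x, 0 ≤ β i v x)
    (hβ_sum : ∀ v (x : X v), ∑ i, β i v x = 1)
    (hQβ_meas : ∀ i v, Measurable (fun x => Q v x * β i v x))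
    (hQβ_int : ∀ i v, Integrable (fun x => Q v x * β i v x) (μ v))
    (φ : Fin C → Fin V → ℝ)
    (hφ : ∀ i v, φ i v = ∫ x, Q v x * β i v x ∂(μ v))
    (hφ_pos : ∀ i v, 0 < φ i v)
    (tw : Fin C → ℝ)
    (htw : ∀ i, tw i = (∏ v, φ i v) ^ ((V : ℝ)⁻¹)) :
    ∀ (v : Fin V) (x : X v),
      ∫ y : ∀ u : {u : Fin V // u ≠ v}, X u.1,
          ((∑ j, tw j)⁻¹ *
            ∑ i, tw i ^ ((1 : ℤ) - (V : ℤ)) *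
              ∏ u : Fin V, (Q u (insertAt v x y u) * β i u (insertAt v x y u)))
        ∂(Measure.pi (fun u : {u : Fin V // u ≠ v} => μ u.1))
      = Q v x * (∑ j, tw j)⁻¹ * ∑ i, β i v x * tw i / φ i v := by
  intro v x
  letI : ∀ u : {u : Fin V // u ≠ v}, MeasureSpace (X u.1) := fun u => ⟨μ u.1⟩
  have hμpi : Measure.pi (fun u : {u : Fin V // u ≠ v} => μ u.1)
      = (volume : Measure (∀ u : {u : Fin V // u ≠ v}, X u.1)) := rfl
  -- positivity facts
  have hprod_pos : ∀ i, 0 < ∏ u, φ i u := fun i =>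
    Finset.prod_pos (fun u _ => hφ_pos i u)
  have htw_pos : ∀ i, 0 < tw i := fun i => by
    rw [htw]; exact Real.rpow_pos_of_pos (hprod_pos i) _
  have htwV : ∀ i, tw i ^ (V : ℕ) = ∏ u, φ i u := fun i => by
    rw [htw, ← Real.rpow_natCast ((∏ u, φ i u) ^ ((V : ℝ)⁻¹)) V,
      ← Real.rpow_mul (hprod_pos i).le, inv_mul_cancel₀ (by exact_mod_cast hV.ne'),
      Real.rpow_one]
  -- factor the product over coordinates
  have hfactor : ∀ i y,
      (∏ u : Fin V, (Q u (insertAt v x y u) * β i u (insertAt v x y u)))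
        = (Q v x * β i v x) * ∏ u : {u : Fin V // u ≠ v}, (Q u.1 (y u) * β i u.1 (y u)) := by
    intro i y
    rw [← Finset.mul_prod_erase Finset.univ _ (Finset.mem_univ v)]
    have hv : insertAt v x y v = x := by simp [insertAt]
    rw [hv]
    congr 1
    rw [Finset.prod_subtype (Finset.univ.erase v)
      (p := fun u => u ≠ v) (fun u => by simp) ]
    refine Finset.prod_congr rfl fun u _ => ?_
    have hu : insertAt v x y u.1 = y u := by
      simp [insertAt, u.2]
    rw [hu]
  have hint : ∀ i : Fin C, Integrable
      (fun y : ∀ u : {u : Fin V // u ≠ v}, X u.1 =>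
        ∏ u : {u : Fin V // u ≠ v}, (Q u.1 (y u) * β i u.1 (y u))) := fun i =>
    Integrable.fintype_prod_dep (f := fun (u : {u : Fin V // u ≠ v}) z => Q u.1 z * β i u.1 z)
      (fun u => hQβ_int i u.1)
  have hintval : ∀ i : Fin C,
      (∫ y : ∀ u : {u : Fin V // u ≠ v}, X u.1,
          ∏ u : {u : Fin V // u ≠ v}, (Q u.1 (y u) * β i u.1 (y u)))
        = ∏ u : {u : Fin V // u ≠ v}, φ i u.1 := by
    intro i
    rw [integral_fintype_prod_volume_eq_prod (fun (u : {u : Fin V // u ≠ v}) z => Q u.1 z * β i u.1 z)]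
    exact Finset.prod_congr rfl fun u _ => (hφ i u.1).symm
  have hφsub : ∀ i, (∏ u : {u : Fin V // u ≠ v}, φ i u.1) = (∏ u, φ i u) / φ i v := by
    intro i
    rw [eq_div_iff (hφ_pos i v).ne',
      ← Finset.prod_subtype (Finset.univ.erase v) (p := fun u => u ≠ v)
        (fun u => by simp) (fun u => φ i u),
      mul_comm, Finset.mul_prod_erase Finset.univ _ (Finset.mem_univ v)]
  simp only [hμpi, hfactor]
  rw [integral_const_mul]
  rw [integral_finset_sum _ (fun i _ => ((hint i).const_mul _).const_mul _)]
  simp_rw [integral_const_mul, hintval, hφsub]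
  have key : ∀ (a T b c : ℝ), T ≠ 0 → a / T * (b * (T / c)) = b * (a / c) := by
    intro a T b c hT
    rw [mul_comm b (T / c), ← mul_assoc, div_mul_div_comm, mul_comm a T,
      mul_div_mul_left _ _ hT, mul_comm]
  have hterm : ∀ i : Fin C, tw i ^ ((1:ℤ) - (V:ℤ)) * (Q v x * β i v x * ((∏ u, φ i u) / φ i v))
      = Q v x * (β i v x * tw i / φ i v) := by
    intro i
    have h1 : tw i ^ ((1:ℤ) - (V:ℤ)) = tw i / tw i ^ (V : ℕ) := by
      rw [zpow_sub₀ (htw_pos i).ne', zpow_one, zpow_natCast]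
    have h2 : tw i ^ (V : ℕ) ≠ 0 := pow_ne_zero _ (htw_pos i).ne'
    rw [h1, ← htwV i, key _ _ _ _ h2]
    ring
  simp_rw [hterm, ← Finset.mul_sum]
  ring
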